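/- arXiv:1209.1123 — 3 statements merged into one kernel-verified Lean document; each statement's English description precedes it below -/
import Mathlib

section
/- (Corollary 1: Youla-like parametrization of all sparse stabilizing controllers.) Let (M, N, M̃, Ñ, X, Y, X̃, Ỹ) be a DCF of the strictly proper plant G ∈ F^{m×p} over Ω, let the sparsity subspace S defined by K^bin be QI under G, and suppose Q₀ ∈ 𝔸^{p×m} is stable and satisfies (X̃·M̃ + M·Q₀·M̃) i j = 0 for every (i,j) with K^bin i j = false. Then a controller K ∈ F^{p×m} stabilizes G and belongs to S if and only if K = K_{Q₀ + Q_δ} for some stable Q_δ ∈ 𝔸^{p×m} satisfying (M·Q_δ·M̃) i j = 0 for every (i,j) with K^bin i j = false. -/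
open Matrix Polynomial Filter

set_option synthInstance.maxHeartbeats 1000000
set_option maxHeartbeats 1000000
set_option linter.unusedVariables false

noncomputable section

/-- The field of real rational functions. -/
abbrev F : Type := RatFunc ℝ

/-- A rational function is stable (w.r.t. stability region `Ω`) if it is proper and
every complex root of the complexification of its reduced denominator lies in `Ω`. -/
def StableF (Ω : Set ℂ) (f : F) : Prop :=
  f.intDegree ≤ 0 ∧ ∀ z : ℂ, (f.denom.map (algebraMap ℝ ℂ)).IsRoot z → z ∈ Ω

/-- A matrix over `F` is stable if all its entries are stable. -/
def MatStable (Ω : Set ℂ) {a b : Type} (M : Matrix a b F) : Prop :=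
  ∀ i j, StableF Ω (M i j)

/-- A matrix over `F` is strictly proper if every entry is `0` or has negative `intDegree`. -/
def StrictlyProper {a b : Type} (G : Matrix a b F) : Prop :=
  ∀ i j, G i j = 0 ∨ (G i j).intDegree < 0

/-- A matrix over `F` is proper if every entry has nonpositive `intDegree`. -/
def ProperM {a b : Type} (K : Matrix a b F) : Prop :=
  ∀ i j, (K i j).intDegree ≤ 0

/-- `K` stabilizes `G` if `I + G*K` is invertible and the four closed-loop
transfer matrices are stable. -/
def Stabilizes (Ω : Set ℂ) {m p : ℕ} (G : Matrix (Fin m) (Fin p) F)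
    (K : Matrix (Fin p) (Fin m) F) : Prop :=
  IsUnit (1 + G * K).det ∧
    MatStable Ω (1 + G * K)⁻¹ ∧
    MatStable Ω ((1 + G * K)⁻¹ * G) ∧
    MatStable Ω (K * (1 + G * K)⁻¹) ∧
    MatStable Ω (1 + K * G)⁻¹

/-- A doubly coprime factorization of `G` over `Ω`. -/
structure IsDCF (Ω : Set ℂ) {m p : ℕ} (G : Matrix (Fin m) (Fin p) F)
    (M : Matrix (Fin p) (Fin p) F) (N : Matrix (Fin m) (Fin p) F)
    (Mt : Matrix (Fin m) (Fin m) F) (Nt : Matrix (Fin m) (Fin p) F)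
    (X : Matrix (Fin p) (Fin m) F) (Y : Matrix (Fin p) (Fin p) F)
    (Xt : Matrix (Fin p) (Fin m) F) (Yt : Matrix (Fin m) (Fin m) F) : Prop where
  stM : MatStable Ω M
  stN : MatStable Ω N
  stMt : MatStable Ω Mt
  stNt : MatStable Ω Nt
  stX : MatStable Ω X
  stY : MatStable Ω Y
  stXt : MatStable Ω Xt
  stYt : MatStable Ω Yt
  hM : IsUnit M.det
  hMt : IsUnit Mt.det
  hLeft : G = Mt⁻¹ * Nt
  hRight : G = N * M⁻¹
  bezout : Matrix.fromBlocks Y X (-Nt) Mt * Matrix.fromBlocks M (-Xt) N Yt = 1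

/-- A left coprime factorization of `G` over `Ω`. -/
def IsLCF (Ω : Set ℂ) {m p : ℕ} (G : Matrix (Fin m) (Fin p) F)
    (Mt : Matrix (Fin m) (Fin m) F) (Nt : Matrix (Fin m) (Fin p) F) : Prop :=
  MatStable Ω Mt ∧ MatStable Ω Nt ∧ IsUnit Mt.det ∧ G = Mt⁻¹ * Nt ∧
    ∃ Xt : Matrix (Fin p) (Fin m) F, ∃ Yt : Matrix (Fin m) (Fin m) F,
      MatStable Ω Xt ∧ MatStable Ω Yt ∧ Nt * Xt + Mt * Yt = 1

/-- A right coprime factorization of `G` over `Ω`. -/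
def IsRCF (Ω : Set ℂ) {m p : ℕ} (G : Matrix (Fin m) (Fin p) F)
    (N : Matrix (Fin m) (Fin p) F) (M : Matrix (Fin p) (Fin p) F) : Prop :=
  MatStable Ω N ∧ MatStable Ω M ∧ IsUnit M.det ∧ G = N * M⁻¹ ∧
    ∃ X : Matrix (Fin p) (Fin m) F, ∃ Y : Matrix (Fin p) (Fin p) F,
      MatStable Ω X ∧ MatStable Ω Y ∧ Y * M + X * N = 1

/-- Evaluation of a rational function at a complex point (complexified num/denom). -/
def evalC (z : ℂ) (f : F) : ℂ :=
  (f.num.map (algebraMap ℝ ℂ)).eval z / (f.denom.map (algebraMap ℝ ℂ)).eval z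

section StableRing

variable {Ω : Set ℂ}

lemma denom_root_of_dvd {f g : F} (h : f.denom ∣ g.denom)
    {z : ℂ} (hz : (f.denom.map (algebraMap ℝ ℂ)).IsRoot z) :
    (g.denom.map (algebraMap ℝ ℂ)).IsRoot z := by
  obtain ⟨c, hc⟩ := h
  have : g.denom.map (algebraMap ℝ ℂ) = f.denom.map (algebraMap ℝ ℂ) * c.map (algebraMap ℝ ℂ) := by
    rw [← Polynomial.map_mul, hc]
  rw [Polynomial.IsRoot, this, Polynomial.eval_mul, hz, zero_mul]

lemma denom_root_of_dvd_mul {f g h : F} (hd : f.denom ∣ g.denom * h.denom)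
    {z : ℂ} (hz : (f.denom.map (algebraMap ℝ ℂ)).IsRoot z) :
    (g.denom.map (algebraMap ℝ ℂ)).IsRoot z ∨ (h.denom.map (algebraMap ℝ ℂ)).IsRoot z := by
  obtain ⟨c, hc⟩ := hd
  have : g.denom.map (algebraMap ℝ ℂ) * h.denom.map (algebraMap ℝ ℂ)
      = f.denom.map (algebraMap ℝ ℂ) * c.map (algebraMap ℝ ℂ) := by
    rw [← Polynomial.map_mul, ← Polynomial.map_mul, hc]
  have h2 : (g.denom.map (algebraMap ℝ ℂ)).eval z * (h.denom.map (algebraMap ℝ ℂ)).eval z = 0 := by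
    rw [← Polynomial.eval_mul, this, Polynomial.eval_mul, hz, zero_mul]
  rcases mul_eq_zero.mp h2 with h' | h'
  · exact Or.inl h'
  · exact Or.inr h'

lemma StableF.zero : StableF Ω 0 := by
  constructor
  · rw [RatFunc.intDegree_zero]
  · intro z hz
    exfalso
    rw [RatFunc.denom_zero] at hz
    simp [Polynomial.IsRoot] at hz

lemma StableF.one : StableF Ω 1 := by
  constructor
  · rw [RatFunc.intDegree_one]
  · intro z hz
    exfalso
    rw [RatFunc.denom_one] at hz
    simp [Polynomial.IsRoot] at hz

lemma StableF.add {f g : F} (hf : StableF Ω f) (hg : StableF Ω g) : StableF Ω (f + g) := by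
  constructor
  · by_cases hfg : f + g = 0
    · rw [hfg, RatFunc.intDegree_zero]
    by_cases hg0 : g = 0
    · rw [hg0, add_zero]; exact hf.1
    calc (f + g).intDegree ≤ max f.intDegree g.intDegree := RatFunc.intDegree_add_le hg0 hfg
      _ ≤ 0 := max_le hf.1 hg.1
  · intro z hz
    rcases denom_root_of_dvd_mul (RatFunc.denom_add_dvd f g) hz with h | h
    · exact hf.2 z h
    · exact hg.2 z h

lemma StableF.mul {f g : F} (hf : StableF Ω f) (hg : StableF Ω g) : StableF Ω (f * g) := by
  constructor
  · by_cases hf0 : f = 0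
    · rw [hf0, zero_mul, RatFunc.intDegree_zero]
    by_cases hg0 : g = 0
    · rw [hg0, mul_zero, RatFunc.intDegree_zero]
    rw [RatFunc.intDegree_mul hf0 hg0]
    exact add_nonpos hf.1 hg.1
  · intro z hz
    rcases denom_root_of_dvd_mul (RatFunc.denom_mul_dvd f g) hz with h | h
    · exact hf.2 z h
    · exact hg.2 z h

lemma RatFunc.denom_neg_dvd (f : F) : (-f).denom ∣ f.denom := by
  have h := RatFunc.num_denom_neg f
  have hdvd : (-f).denom ∣ (-f).num * f.denom := by
    rw [h]; exact Dvd.intro_left _ rfl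
  exact ((RatFunc.isCoprime_num_denom (-f)).symm).dvd_of_dvd_mul_left hdvd

lemma StableF.neg {f : F} (hf : StableF Ω f) : StableF Ω (-f) := by
  constructor
  · rw [RatFunc.intDegree_neg]; exact hf.1
  · intro z hz
    exact hf.2 z (denom_root_of_dvd (RatFunc.denom_neg_dvd f) hz)

lemma StableF.sub {f g : F} (hf : StableF Ω f) (hg : StableF Ω g) : StableF Ω (f - g) := by
  rw [sub_eq_add_neg]; exact hf.add hg.neg

end StableRing

section MatStableClosure

variable {Ω : Set ℂ} {a b c : Type}

lemma MatStable.add {A B : Matrix a b F} (hA : MatStable Ω A) (hB : MatStable Ω B) :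
    MatStable Ω (A + B) := fun i j => by
  rw [Matrix.add_apply]; exact (hA i j).add (hB i j)

lemma MatStable.neg {A : Matrix a b F} (hA : MatStable Ω A) : MatStable Ω (-A) := fun i j => by
  rw [Matrix.neg_apply]; exact (hA i j).neg

lemma MatStable.sub {A B : Matrix a b F} (hA : MatStable Ω A) (hB : MatStable Ω B) :
    MatStable Ω (A - B) := fun i j => by
  rw [Matrix.sub_apply, sub_eq_add_neg]; exact (hA i j).add (hB i j).neg

lemma MatStable.one [DecidableEq a] : MatStable Ω (1 : Matrix a a F) := fun i j => by
  by_cases h : i = j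
  · rw [h, Matrix.one_apply_eq]; exact StableF.one
  · rw [Matrix.one_apply_ne h]; exact StableF.zero

lemma MatStable.mul [Fintype b] {A : Matrix a b F} {B : Matrix b c F}
    (hA : MatStable Ω A) (hB : MatStable Ω B) : MatStable Ω (A * B) := fun i j => by
  rw [Matrix.mul_apply]
  apply Finset.sum_induction _ (StableF Ω) (fun _ _ hf hg => hf.add hg) StableF.zero
  intro k _
  exact (hA i k).mul (hB k j)

end MatStableClosure

def ev (x : ℝ) (f : F) : ℝ := RatFunc.eval (RingHom.id ℝ) x f

lemma ev_num_div_denom (x : ℝ) (f : F) : ev x f = f.num.eval x / f.denom.eval x := rfl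

lemma eventually_denom_ne (f : F) :
    ∀ᶠ x in atTop, Polynomial.eval₂ (RingHom.id ℝ) x f.denom ≠ 0 := by
  filter_upwards [Polynomial.eventually_no_roots f.denom f.denom_ne_zero] with x hx
  exact hx

lemma ev_add (f g : F) : ∀ᶠ x in atTop, ev x (f + g) = ev x f + ev x g := by
  filter_upwards [eventually_denom_ne f, eventually_denom_ne g] with x hf hg
  unfold ev
  exact RatFunc.eval_add (f := RingHom.id ℝ) (a := x) hf hg

lemma ev_mul (f g : F) : ∀ᶠ x in atTop, ev x (f * g) = ev x f * ev x g := by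
  filter_upwards [eventually_denom_ne f, eventually_denom_ne g] with x hf hg
  unfold ev
  exact RatFunc.eval_mul (f := RingHom.id ℝ) (a := x) hf hg

lemma ev_zero (x : ℝ) : ev x 0 = 0 := RatFunc.eval_zero _ _

lemma ev_one (x : ℝ) : ev x 1 = 1 := RatFunc.eval_one _ _

lemma ev_sum {ι : Type*} (s : Finset ι) (v : ι → F) :
    ∀ᶠ x in atTop, ev x (∑ i ∈ s, v i) = ∑ i ∈ s, ev x (v i) := by
  classical
  induction s using Finset.cons_induction with
  | empty => simp [ev_zero]
  | cons a s ha ih =>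
      filter_upwards [ev_add (v a) (∑ i ∈ s, v i), ih] with x h1 h2
      rw [Finset.sum_cons, h1, h2, Finset.sum_cons]

lemma ev_tendsto {f : F} (h : f.intDegree ≤ 0) :
    ∃ L : ℝ, Tendsto (fun x => ev x f) atTop (nhds L) := by
  by_cases hf : f = 0
  · exact ⟨0, by simp [hf, ev_zero, tendsto_const_nhds]⟩
  have hnum : f.num ≠ 0 := RatFunc.num_ne_zero hf
  have hle : f.num.natDegree ≤ f.denom.natDegree := by
    have := h
    rw [RatFunc.intDegree] at this
    omega
  simp only [ev_num_div_denom]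
  rcases lt_or_eq_of_le hle with hlt | heq
  · exact ⟨0, Polynomial.div_tendsto_zero_of_degree_lt _ _ (Polynomial.degree_lt_degree hlt)⟩
  · refine ⟨_, Polynomial.div_tendsto_leadingCoeff_div_of_degree_eq _ _ ?_⟩
    rw [Polynomial.degree_eq_natDegree hnum, Polynomial.degree_eq_natDegree f.denom_ne_zero, heq]

lemma ev_tendsto0 {f : F} (h : f = 0 ∨ f.intDegree < 0) :
    Tendsto (fun x => ev x f) atTop (nhds 0) := by
  rcases h with hf | h
  · simp [hf, ev_zero, tendsto_const_nhds]
  by_cases hf : f = 0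
  · simp [hf, ev_zero, tendsto_const_nhds]
  have hlt : f.num.natDegree < f.denom.natDegree := by
    rw [RatFunc.intDegree] at h; omega
  simp only [ev_num_div_denom]
  exact Polynomial.div_tendsto_zero_of_degree_lt _ _ (Polynomial.degree_lt_degree hlt)

/-- eventual evaluation of a dot-product style sum -/
lemma ev_dot {ι : Type*} (s : Finset ι) (u e : ι → F) :
    ∀ᶠ x in atTop, ev x (∑ i ∈ s, u i * e i) = ∑ i ∈ s, ev x (u i) * ev x (e i) := by
  have h1 : ∀ᶠ x in atTop, ∀ i ∈ s, ev x (u i * e i) = ev x (u i) * ev x (e i) := by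
    rw [Filter.eventually_all_finset]
    intro i _
    exact ev_mul (u i) (e i)
  filter_upwards [ev_sum s (fun i => u i * e i), h1] with x hx hx2
  rw [hx]
  exact Finset.sum_congr rfl hx2

lemma isUnit_det_of_evanescent {p : ℕ} (A B E : Matrix (Fin p) (Fin p) F)
    (hA : ∀ i j, (A i j).intDegree ≤ 0)
    (hE : ∀ i j, Tendsto (fun x => ev x (E i j)) atTop (nhds 0))
    (h : A * B + E = 1) : IsUnit A.det := by
  classical
  by_contra hdet
  rw [isUnit_iff_ne_zero, not_not] at hdet
  obtain ⟨v, hv0, hvA⟩ := Matrix.exists_vecMul_eq_zero_iff.mpr hdet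
  -- pick index with maximal intDegree among nonzero entries
  have hTne : (Finset.univ.filter (fun i => v i ≠ 0)).Nonempty := by
    obtain ⟨i, hi⟩ := Function.ne_iff.mp hv0
    exact ⟨i, by simpa using hi⟩
  obtain ⟨i0, hi0mem, hi0max⟩ :=
    (Finset.univ.filter (fun i => v i ≠ 0)).exists_max_image (fun i => (v i).intDegree) hTne
  have hc : v i0 ≠ 0 := (Finset.mem_filter.mp hi0mem).2
  set c := v i0 with hcdef
  set w : Fin p → F := fun i => v i * c⁻¹ with hwdef
  have hwinv : (c⁻¹ : F).intDegree = -c.intDegree := by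
    have := RatFunc.intDegree_mul hc (inv_ne_zero hc)
    rw [mul_inv_cancel₀ hc, RatFunc.intDegree_one] at this
    omega
  have hwprop : ∀ i, (w i).intDegree ≤ 0 := by
    intro i
    by_cases hvi : v i = 0
    · simp [hwdef, hvi, RatFunc.intDegree_zero]
    · rw [hwdef]
      simp only
      rw [RatFunc.intDegree_mul hvi (inv_ne_zero hc), hwinv]
      have := hi0max i (by simp [hvi])
      omega
  have hwi0 : w i0 = 1 := mul_inv_cancel₀ hc
  have hwA : w ᵥ* A = 0 := by
    funext j
    have hv : (v ᵥ* A) j = 0 := by rw [hvA]; rfl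
    simp only [Matrix.vecMul, dotProduct, hwdef, Pi.zero_apply] at hv ⊢
    calc ∑ i, v i * c⁻¹ * A i j = c⁻¹ * ∑ i, v i * A i j := by
          rw [Finset.mul_sum]; exact Finset.sum_congr rfl (fun i _ => by ring)
      _ = 0 := by rw [hv, mul_zero]
  have hwE : w = w ᵥ* E := by
    have h1 : w ᵥ* (A * B + E) = w := by rw [h, Matrix.vecMul_one]
    rw [Matrix.vecMul_add, ← Matrix.vecMul_vecMul, hwA, Matrix.zero_vecMul, zero_add] at h1
    exact h1.symm
  -- limits
  choose L hL using fun i => ev_tendsto (hwprop i)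
  have hsum : Tendsto (fun x => ∑ i, ev x (w i) * ev x (E i i0)) atTop (nhds 0) := by
    have : Tendsto (fun x => ∑ i, ev x (w i) * ev x (E i i0)) atTop
        (nhds (∑ i : Fin p, L i * 0)) := by
      apply tendsto_finset_sum
      intro i _
      exact (hL i).mul (hE i i0)
    simpa using this
  have hev : ∀ᶠ x in atTop, ev x (w i0) = ∑ i, ev x (w i) * ev x (E i i0) := by
    have hwcoord : w i0 = ∑ i, w i * E i i0 := by
      conv_lhs => rw [hwE]
      simp [Matrix.vecMul, dotProduct]
    filter_upwards [ev_dot Finset.univ w (fun i => E i i0)] with x hx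
    rw [hwcoord, hx]
  have h1' : Tendsto (fun x => ev x (w i0)) atTop (nhds 0) := hsum.congr' (by
    filter_upwards [hev] with x hx; exact hx.symm)
  have h2' : Tendsto (fun x => ev x (w i0)) atTop (nhds 1) := by
    have : (fun x => ev x (w i0)) = fun _ => (1:ℝ) := by
      funext x; rw [hwi0, ev_one]
    rw [this]; exact tendsto_const_nhds
  exact zero_ne_one (tendsto_nhds_unique h1' h2')

section MatLimits

variable {a b c : Type} [Fintype b]

lemma ev_entry_mul_eventually (A : Matrix a b F) (B : Matrix b c F) (i : a) (j : c) :
    ∀ᶠ x in atTop, ev x ((A * B) i j) = ∑ k, ev x (A i k) * ev x (B k j) := by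
  filter_upwards [ev_dot Finset.univ (fun k => A i k) (fun k => B k j)] with x hx
  rw [Matrix.mul_apply]
  exact hx

/-- If `A`'s entries have limits at infinity and `B`'s entries tend to zero,
then the entries of `A * B` tend to zero. -/
lemma ev_tendsto_mul_right_zero (A : Matrix a b F) (B : Matrix b c F)
    (hA : ∀ i j, ∃ L : ℝ, Tendsto (fun x => ev x (A i j)) atTop (nhds L))
    (hB : ∀ k j, Tendsto (fun x => ev x (B k j)) atTop (nhds 0)) :
    ∀ i j, Tendsto (fun x => ev x ((A * B) i j)) atTop (nhds 0) := by
  intro i j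
  choose L hL using hA
  have h1 : Tendsto (fun x => ∑ k, ev x (A i k) * ev x (B k j)) atTop
      (nhds (∑ k : b, L i k * 0)) :=
    tendsto_finset_sum _ (fun k _ => (hL i k).mul (hB k j))
  simp only [mul_zero, Finset.sum_const_zero] at h1
  exact h1.congr' (by filter_upwards [ev_entry_mul_eventually A B i j] with x hx; exact hx.symm)

/-- If `A`'s entries tend to zero and `B`'s entries have limits,
then the entries of `A * B` tend to zero. -/
lemma ev_tendsto_mul_left_zero (A : Matrix a b F) (B : Matrix b c F)
    (hA : ∀ i j, Tendsto (fun x => ev x (A i j)) atTop (nhds 0))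
    (hB : ∀ k j, ∃ L : ℝ, Tendsto (fun x => ev x (B k j)) atTop (nhds L)) :
    ∀ i j, Tendsto (fun x => ev x ((A * B) i j)) atTop (nhds 0) := by
  intro i j
  choose L hL using hB
  have h1 : Tendsto (fun x => ∑ k, ev x (A i k) * ev x (B k j)) atTop
      (nhds (∑ k : b, 0 * L k j)) :=
    tendsto_finset_sum _ (fun k _ => (hA i k).mul (hL k j))
  simp only [zero_mul, Finset.sum_const_zero] at h1
  exact h1.congr' (by filter_upwards [ev_entry_mul_eventually A B i j] with x hx; exact hx.symm)

end MatLimits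

section Sparse

variable {m p : ℕ} (Kbin : Fin p → Fin m → Bool)

def Sp (A : Matrix (Fin p) (Fin m) F) : Prop :=
  ∀ i j, Kbin i j = false → A i j = 0

variable {Kbin}

lemma Sp.add {A B} (hA : Sp Kbin A) (hB : Sp Kbin B) : Sp Kbin (A + B) := by
  intro i j h; simp [Matrix.add_apply, hA i j h, hB i j h]

lemma Sp.sub {A B} (hA : Sp Kbin A) (hB : Sp Kbin B) : Sp Kbin (A - B) := by
  intro i j h; simp [Matrix.sub_apply, hA i j h, hB i j h]

lemma Sp.smul {A} (c : F) (hA : Sp Kbin A) : Sp Kbin (c • A) := by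
  intro i j h; simp [Matrix.smul_apply, hA i j h]

lemma Sp.zero : Sp Kbin (0 : Matrix (Fin p) (Fin m) F) := by
  intro i j _; rfl

lemma Sp.sum {ι : Type*} (s : Finset ι) (f : ι → Matrix (Fin p) (Fin m) F)
    (hf : ∀ i ∈ s, Sp Kbin (f i)) : Sp Kbin (∑ i ∈ s, f i) := by
  classical
  induction s using Finset.cons_induction with
  | empty => simpa using Sp.zero
  | cons a s ha ih =>
      rw [Finset.sum_cons]
      exact (hf a (Finset.mem_cons_self a s)).add
        (ih fun i hi => hf i (Finset.mem_cons_of_mem hi))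

variable {G' : Matrix (Fin m) (Fin p) F}

lemma sp_pow (hQI : ∀ W, Sp Kbin W → Sp Kbin (W * G' * W))
    {W : Matrix (Fin p) (Fin m) F} (hW : Sp Kbin W) :
    ∀ n : ℕ, Sp Kbin (W * (G' * W) ^ n) := by
  intro n
  induction n with
  | zero => simpa using hW
  | succ n ih =>
      set A := W * (G' * W) ^ n with hA
      have hU : Sp Kbin ((W + A) * G' * (W + A)) := hQI _ (hW.add ih)
      have hU' : Sp Kbin ((W - A) * G' * (W - A)) := hQI _ (hW.sub ih)
      have e1 : W * G' * A = W * (G' * W) ^ (n + 1) := by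
        simp [hA, pow_succ', Matrix.mul_assoc]
      have e2 : A * G' * W = W * (G' * W) ^ (n + 1) := by
        simp [hA, pow_succ, Matrix.mul_assoc]
      have expand : (W + A) * G' * (W + A) - (W - A) * G' * (W - A)
          = (2 : F) • (W * G' * A) + (2 : F) • (A * G' * W) := by
        simp only [Matrix.add_mul, Matrix.mul_add, Matrix.sub_mul, Matrix.mul_sub]
        ext i j
        simp only [Matrix.add_apply, Matrix.sub_apply, Matrix.smul_apply, smul_eq_mul]
        ring
      have key : (W + A) * G' * (W + A) - (W - A) * G' * (W - A)
          = (4 : F) • (W * (G' * W) ^ (n + 1)) := by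
        rw [expand, e1, e2]
        ext i j
        simp only [Matrix.add_apply, Matrix.smul_apply, smul_eq_mul]
        ring
      intro i j h
      have h2 := (hU.sub hU') i j h
      rw [key] at h2
      simp only [Matrix.smul_apply, smul_eq_mul] at h2
      have h4 : (4 : F) ≠ 0 := by
        have h5 : algebraMap ℝ F 4 ≠ 0 := by
          rw [_root_.map_ne_zero]; norm_num
        rw [map_ofNat] at h5
        exact h5
      exact (mul_eq_zero.mp h2).resolve_left h4

lemma sp_mul_aeval (hQI : ∀ W, Sp Kbin W → Sp Kbin (W * G' * W))
    {W : Matrix (Fin p) (Fin m) F} (hW : Sp Kbin W) (q : Polynomial F) :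
    Sp Kbin (W * (Polynomial.aeval (G' * W) q)) := by
  rw [Polynomial.aeval_eq_sum_range, Matrix.mul_sum]
  apply Sp.sum
  intro i _
  have : W * (q.coeff i • (G' * W) ^ i) = q.coeff i • (W * (G' * W) ^ i) := by
    rw [Matrix.mul_smul]
  rw [this]
  exact Sp.smul _ (sp_pow hQI hW i)

lemma sp_closed_loop (hQI : ∀ W, Sp Kbin W → Sp Kbin (W * G' * W))
    {W : Matrix (Fin p) (Fin m) F} (hW : Sp Kbin W)
    (hB : IsUnit (1 + G' * W).det) :
    Sp Kbin (W * (1 + G' * W)⁻¹) := by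
  classical
  set B := 1 + G' * W with hBdef
  set χ := B.charpoly with hχ
  have hCH : Polynomial.aeval B χ = 0 := Matrix.aeval_self_charpoly B
  set c := χ.coeff 0 with hc
  have hcne : c ≠ 0 := by
    intro h0
    have hdet := Matrix.det_eq_sign_charpoly_coeff B
    rw [← hχ, ← hc, h0, mul_zero] at hdet
    rw [hdet] at hB
    simp at hB
  have hkey : B * Polynomial.aeval B χ.divX + c • (1 : Matrix (Fin m) (Fin m) F) = 0 := by
    have h5 := congrArg (Polynomial.aeval B) (Polynomial.X_mul_divX_add χ)
    rw [map_add] at h5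
    have h3 : (Polynomial.aeval B) (Polynomial.X * χ.divX) = B * Polynomial.aeval B χ.divX := by
      rw [_root_.map_mul, Polynomial.aeval_X]
    have h4 : (Polynomial.aeval B) (Polynomial.C (χ.coeff 0))
        = c • (1 : Matrix (Fin m) (Fin m) F) := by
      rw [Polynomial.aeval_C, Algebra.algebraMap_eq_smul_one]
    rw [h3, h4, hCH] at h5
    exact h5
  have hBD : B * ((-c⁻¹) • Polynomial.aeval B χ.divX) = 1 := by
    rw [Matrix.mul_smul]
    have h2 : B * Polynomial.aeval B χ.divX = -(c • 1) := by
      have := hkey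
      rw [add_eq_zero_iff_eq_neg] at this
      exact this
    rw [h2, smul_neg, neg_smul, neg_neg, smul_smul, inv_mul_cancel₀ hcne, one_smul]
  have hinv : B⁻¹ = (-c⁻¹) • Polynomial.aeval B χ.divX := Matrix.inv_eq_right_inv hBD
  have hcomp : Polynomial.aeval B χ.divX
      = Polynomial.aeval (G' * W) (χ.divX.comp (Polynomial.X + 1)) := by
    rw [Polynomial.aeval_comp]
    congr 1
    rw [map_add, Polynomial.aeval_X, Polynomial.aeval_one, hBdef, add_comm]
  rw [hinv, hcomp, Matrix.mul_smul]
  exact Sp.smul _ (sp_mul_aeval hQI hW _)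

end Sparse

lemma shifted_identities {m p : ℕ}
    {M Y : Matrix (Fin p) (Fin p) F} {N Nt : Matrix (Fin m) (Fin p) F}
    {Mt Yt : Matrix (Fin m) (Fin m) F} {X Xt : Matrix (Fin p) (Fin m) F}
    (bez : Matrix.fromBlocks Y X (-Nt) Mt * Matrix.fromBlocks M (-Xt) N Yt = 1)
    (Q : Matrix (Fin p) (Fin m) F) :
    ((Y - Q * Nt) * M + (X + Q * Mt) * N = 1) ∧
    ((X + Q * Mt) * (Yt - N * Q) = (Y - Q * Nt) * (Xt + M * Q)) ∧
    (Nt * (Xt + M * Q) + Mt * (Yt - N * Q) = 1) ∧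
    (M * (Y - Q * Nt) + (Xt + M * Q) * Nt = 1) ∧
    (M * (X + Q * Mt) = (Xt + M * Q) * Mt) := by
  classical
  set L := Matrix.fromBlocks Y X (-Nt) Mt with hLdef
  set R := Matrix.fromBlocks M (-Xt) N Yt with hRdef
  set U : Matrix (Fin p ⊕ Fin m) (Fin p ⊕ Fin m) F := Matrix.fromBlocks 1 Q 0 1 with hUdef
  set V : Matrix (Fin p ⊕ Fin m) (Fin p ⊕ Fin m) F := Matrix.fromBlocks 1 (-Q) 0 1 with hVdef
  have hUV : U * V = 1 := by
    rw [hUdef, hVdef, Matrix.fromBlocks_multiply]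
    simp [Matrix.fromBlocks_one]
  have hUL : U * L = Matrix.fromBlocks (Y - Q * Nt) (X + Q * Mt) (-Nt) Mt := by
    rw [hUdef, hLdef, Matrix.fromBlocks_multiply]
    congr 1 <;> simp [Matrix.mul_neg, sub_eq_add_neg]
  have hRV : R * V = Matrix.fromBlocks M (-(Xt + M * Q)) N (Yt - N * Q) := by
    rw [hRdef, hVdef, Matrix.fromBlocks_multiply]
    congr 1 <;> simp [Matrix.mul_neg, sub_eq_add_neg, add_comm]
  have hL1 : (U * L) * (R * V) = 1 := by
    calc (U * L) * (R * V) = U * (L * R) * V := by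
          rw [Matrix.mul_assoc, Matrix.mul_assoc, Matrix.mul_assoc]
      _ = U * V := by rw [bez, Matrix.mul_one]
      _ = 1 := hUV
  have hR1 : (R * V) * (U * L) = 1 := mul_eq_one_comm.mp hL1
  rw [hUL, hRV] at hL1 hR1
  rw [Matrix.fromBlocks_multiply] at hL1 hR1
  rw [← Matrix.fromBlocks_one] at hL1 hR1
  have e11 := congrArg Matrix.toBlocks₁₁ hL1
  have e12 := congrArg Matrix.toBlocks₁₂ hL1
  have e22 := congrArg Matrix.toBlocks₂₂ hL1
  have f11 := congrArg Matrix.toBlocks₁₁ hR1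
  have f12 := congrArg Matrix.toBlocks₁₂ hR1
  simp only [Matrix.toBlocks_fromBlocks₁₁, Matrix.toBlocks_fromBlocks₁₂,
    Matrix.toBlocks_fromBlocks₂₂] at e11 e12 e22 f11 f12
  refine ⟨e11, ?_, ?_, ?_, ?_⟩
  · simp only [Matrix.mul_neg] at e12
    exact (neg_add_eq_zero.mp e12).symm
  · simp only [Matrix.neg_mul, Matrix.mul_neg, neg_neg] at e22
    exact e22
  · simp only [Matrix.neg_mul, Matrix.mul_neg, neg_neg] at f11
    exact f11
  · simp only [Matrix.neg_mul] at f12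
    exact add_neg_eq_zero.mp f12

lemma mul_left_cancel_det {n r : ℕ} {A : Matrix (Fin n) (Fin n) F} (hA : IsUnit A.det)
    {B C : Matrix (Fin n) (Fin r) F} (h : A * B = A * C) : B = C := by
  have h2 := congrArg (fun Z => A⁻¹ * Z) h
  simpa only [← Matrix.mul_assoc, Matrix.nonsing_inv_mul _ hA, Matrix.one_mul] using h2

lemma one_sub_mul_shift {n r : ℕ} (A : Matrix (Fin n) (Fin r) F) (B : Matrix (Fin r) (Fin n) F) :
    (1 - A * B) * A = A * (1 - B * A) := by
  rw [Matrix.sub_mul, Matrix.mul_sub, Matrix.one_mul, Matrix.mul_one, Matrix.mul_assoc]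

lemma core_identities {m p : ℕ}
    (G : Matrix (Fin m) (Fin p) F)
    (M Y : Matrix (Fin p) (Fin p) F) (N Nt : Matrix (Fin m) (Fin p) F)
    (Mt Yt : Matrix (Fin m) (Fin m) F) (X Xt : Matrix (Fin p) (Fin m) F)
    (Q K : Matrix (Fin p) (Fin m) F)
    (hMt : IsUnit Mt.det)
    (hMtG : Mt * G = Nt) (hGM : G * M = N)
    (s1 : (Y - Q * Nt) * M + (X + Q * Mt) * N = 1)
    (s2 : (X + Q * Mt) * (Yt - N * Q) = (Y - Q * Nt) * (Xt + M * Q))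
    (s3 : Nt * (Xt + M * Q) + Mt * (Yt - N * Q) = 1)
    (s4 : M * (Y - Q * Nt) + (Xt + M * Q) * Nt = 1)
    (s5 : M * (X + Q * Mt) = (Xt + M * Q) * Mt)
    (hYq : IsUnit (Y - Q * Nt).det)
    (hK : (Y - Q * Nt) * K = X + Q * Mt) :
    ((1 + G * K) * ((Yt - N * Q) * Mt) = 1) ∧
    (K * ((Yt - N * Q) * Mt) = (Xt + M * Q) * Mt) ∧
    ((1 + K * G) * (M * (Y - Q * Nt)) = 1) ∧
    (((Xt + M * Q) * Mt) * (1 + G * K) = K) := by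
  set Yq := Y - Q * Nt with hYqd
  set Xq := X + Q * Mt with hXqd
  set Xtq := Xt + M * Q with hXtqd
  set Ytq := Yt - N * Q with hYtqd
  have KYtq : K * Ytq = Xtq := by
    apply mul_left_cancel_det hYq
    calc Yq * (K * Ytq) = (Yq * K) * Ytq := by rw [Matrix.mul_assoc]
      _ = Xq * Ytq := by rw [hK]
      _ = Yq * Xtq := s2
  have c2 : K * (Ytq * Mt) = Xtq * Mt := by
    rw [← Matrix.mul_assoc, KYtq]
  have GXtqMt : G * (Xtq * Mt) = 1 - Ytq * Mt := by
    apply mul_left_cancel_det hMt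
    calc Mt * (G * (Xtq * Mt)) = (Mt * G) * (Xtq * Mt) := by rw [Matrix.mul_assoc]
      _ = (Nt * Xtq) * Mt := by rw [hMtG, Matrix.mul_assoc]
      _ = (1 - Mt * Ytq) * Mt := by
          have : Nt * Xtq = 1 - Mt * Ytq := by
            rw [eq_sub_iff_add_eq]; exact s3
          rw [this]
      _ = Mt * (1 - Ytq * Mt) := one_sub_mul_shift Mt Ytq
  have c1 : (1 + G * K) * (Ytq * Mt) = 1 := by
    calc (1 + G * K) * (Ytq * Mt) = Ytq * Mt + G * (K * (Ytq * Mt)) := by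
          rw [Matrix.add_mul, Matrix.one_mul, Matrix.mul_assoc]
      _ = Ytq * Mt + (1 - Ytq * Mt) := by rw [c2, GXtqMt]
      _ = 1 := by abel
  have KNYq : K * (N * Yq) = 1 - M * Yq := by
    apply mul_left_cancel_det hYq
    calc Yq * (K * (N * Yq)) = ((Yq * K) * N) * Yq := by
          rw [← Matrix.mul_assoc, ← Matrix.mul_assoc]
      _ = (Xq * N) * Yq := by rw [hK]
      _ = (1 - Yq * M) * Yq := by
          have : Xq * N = 1 - Yq * M := by rw [eq_sub_iff_add_eq, add_comm]; exact s1
          rw [this]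
      _ = Yq * (1 - M * Yq) := one_sub_mul_shift Yq M
  have c3 : (1 + K * G) * (M * Yq) = 1 := by
    calc (1 + K * G) * (M * Yq) = M * Yq + K * ((G * M) * Yq) := by
          rw [Matrix.add_mul, Matrix.one_mul, Matrix.mul_assoc, Matrix.mul_assoc]
      _ = M * Yq + (1 - M * Yq) := by rw [hGM, KNYq]
      _ = 1 := by abel
  have c4 : (Xtq * Mt) * (1 + G * K) = K := by
    calc (Xtq * Mt) * (1 + G * K) = Xtq * Mt + Xtq * ((Mt * G) * K) := by
          rw [Matrix.mul_add, Matrix.mul_one, Matrix.mul_assoc, Matrix.mul_assoc]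
      _ = Xtq * Mt + (Xtq * Nt) * K := by rw [hMtG, Matrix.mul_assoc]
      _ = Xtq * Mt + (1 - M * Yq) * K := by
          have : Xtq * Nt = 1 - M * Yq := by rw [eq_sub_iff_add_eq, add_comm]; exact s4
          rw [this]
      _ = Xtq * Mt + K - M * Xq := by
          rw [Matrix.sub_mul, Matrix.one_mul, Matrix.mul_assoc, hK]
          abel
      _ = K := by rw [s5]; abel
  exact ⟨c1, c2, c3, c4⟩


/-- **Corollary 1 (Youla-like parametrization of all sparse stabilizing controllers).**
If `Q₀` is a stable solution of the model-matching problem, then `K` stabilizes `G` and lies in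
`S` iff `K = K_{Q₀+Q_δ}` for some stable `Q_δ` with `vec(Q_δ) ∈ Null(Φ(Mᵀ⊗M̃))`, i.e.
`(M·Q_δ·M̃) i j = 0` whenever `Kbin i j = false`. -/
theorem youla_like_sparse_parametrization (Ω : Set ℂ) (m p : ℕ)
    (G : Matrix (Fin m) (Fin p) F) (hG : StrictlyProper G)
    (M : Matrix (Fin p) (Fin p) F) (N : Matrix (Fin m) (Fin p) F)
    (Mt : Matrix (Fin m) (Fin m) F) (Nt : Matrix (Fin m) (Fin p) F)
    (X : Matrix (Fin p) (Fin m) F) (Y : Matrix (Fin p) (Fin p) F)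
    (Xt : Matrix (Fin p) (Fin m) F) (Yt : Matrix (Fin m) (Fin m) F)
    (hDCF : IsDCF Ω G M N Mt Nt X Y Xt Yt)
    (Kbin : Fin p → Fin m → Bool)
    (hQI : ∀ K : Matrix (Fin p) (Fin m) F,
      (∀ i j, Kbin i j = false → K i j = 0) →
      (∀ i j, Kbin i j = false → (K * G * K) i j = 0))
    (Q₀ : Matrix (Fin p) (Fin m) F) (hQ₀stable : MatStable Ω Q₀)
    (hQ₀ : ∀ i j, Kbin i j = false → (Xt * Mt + M * Q₀ * Mt) i j = 0)
    (K : Matrix (Fin p) (Fin m) F) :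
    (Stabilizes Ω G K ∧ (∀ i j, Kbin i j = false → K i j = 0)) ↔
    (∃ Qδ : Matrix (Fin p) (Fin m) F, MatStable Ω Qδ ∧
      (∀ i j, Kbin i j = false → (M * Qδ * Mt) i j = 0) ∧
      K = (Y - (Q₀ + Qδ) * Nt)⁻¹ * (X + (Q₀ + Qδ) * Mt)) := by
  classical
  have hMtG : Mt * G = Nt := by
    rw [hDCF.hLeft, ← Matrix.mul_assoc, Matrix.mul_nonsing_inv _ hDCF.hMt, Matrix.one_mul]
  have hGM : G * M = N := by
    rw [hDCF.hRight, Matrix.mul_assoc, Matrix.nonsing_inv_mul _ hDCF.hM, Matrix.mul_one]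
  have hNlim : ∀ k j, Filter.Tendsto (fun x => ev x (N k j)) Filter.atTop (nhds 0) := by
    have := ev_tendsto_mul_left_zero G M (fun i j => ev_tendsto0 (hG i j))
      (fun k j => ev_tendsto (hDCF.stM k j).1)
    rwa [hGM] at this
  have hQIg : ∀ W, Sp Kbin W → Sp Kbin (W * G * W) := fun W hW i j h => hQI W hW i j h
  have hQIneg : ∀ W : Matrix (Fin p) (Fin m) F, Sp Kbin W → Sp Kbin (W * (-G) * W) := by
    intro W hW i j h
    have h2 : W * (-G) * W = -(W * G * W) := by rw [Matrix.mul_neg, Matrix.neg_mul]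
    rw [h2, Matrix.neg_apply, hQIg W hW i j h, neg_zero]
  constructor
  · -- necessity
    rintro ⟨⟨hdet, st2, st3, st4, st5⟩, hKsp⟩
    have hdetKG : IsUnit (1 + K * G).det := by
      rw [← Matrix.det_one_add_mul_comm]; exact hdet
    have pt : K * (1 + G * K)⁻¹ = (1 + K * G)⁻¹ * K := by
      have e : (1 + K * G) * K = K * (1 + G * K) := by
        rw [Matrix.add_mul, Matrix.mul_add, Matrix.one_mul, Matrix.mul_one, Matrix.mul_assoc]
      calc K * (1 + G * K)⁻¹
          = ((1 + K * G)⁻¹ * (1 + K * G)) * (K * (1 + G * K)⁻¹) := by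
            rw [Matrix.nonsing_inv_mul _ hdetKG, Matrix.one_mul]
        _ = (1 + K * G)⁻¹ * (((1 + K * G) * K) * (1 + G * K)⁻¹) := by
            rw [Matrix.mul_assoc, Matrix.mul_assoc]
        _ = (1 + K * G)⁻¹ * (K * ((1 + G * K) * (1 + G * K)⁻¹)) := by
            rw [e, Matrix.mul_assoc]
        _ = (1 + K * G)⁻¹ * K := by
            rw [Matrix.mul_nonsing_inv _ hdet, Matrix.mul_one]
    have stKIG : MatStable Ω (K * (1 + G * K)⁻¹ * G) := by
      have e3 : K * G = (1 + K * G) - 1 := by rw [add_sub_cancel_left]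
      have e2 : K * (1 + G * K)⁻¹ * G = 1 - (1 + K * G)⁻¹ := by
        calc K * (1 + G * K)⁻¹ * G = (1 + K * G)⁻¹ * (K * G) := by
              rw [pt, Matrix.mul_assoc]
          _ = (1 + K * G)⁻¹ * ((1 + K * G) - 1) :=
              congrArg (fun Z => (1 + K * G)⁻¹ * Z) e3
          _ = 1 - (1 + K * G)⁻¹ := by
              rw [Matrix.mul_sub, Matrix.nonsing_inv_mul _ hdetKG, Matrix.mul_one]
      rw [e2]; exact MatStable.one.sub st5
    have b4' : Nt * Xt + Mt * Yt = 1 := by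
      have h0 := (shifted_identities hDCF.bezout 0).2.2.1
      simpa using h0
    have hMtiv : Mt * (G * Xt + Yt) = 1 := by
      rw [Matrix.mul_add, ← Matrix.mul_assoc, hMtG]; exact b4'
    have hMtinv : Mt⁻¹ = G * Xt + Yt := Matrix.inv_eq_right_inv hMtiv
    have hWfac : Mt + Nt * K = Mt * (1 + G * K) := by
      rw [Matrix.mul_add, Matrix.mul_one, ← Matrix.mul_assoc, hMtG]
    have hWU : IsUnit (Mt + Nt * K).det := by
      rw [hWfac, Matrix.det_mul]; exact hDCF.hMt.mul hdet
    set Q := (Y * K - X) * (Mt + Nt * K)⁻¹ with hQdef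
    have hQMt : Q * (Mt + Nt * K) = Y * K - X := by
      rw [hQdef, Matrix.mul_assoc, Matrix.nonsing_inv_mul _ hWU, Matrix.mul_one]
    have hWinv : (Mt + Nt * K)⁻¹ = (1 + G * K)⁻¹ * (G * Xt + Yt) := by
      rw [hWfac, Matrix.mul_inv_rev, hMtinv]
    have stP1 : MatStable Ω ((1 + G * K)⁻¹ * (G * Xt + Yt)) := by
      have e : (1 + G * K)⁻¹ * (G * Xt + Yt)
          = ((1 + G * K)⁻¹ * G) * Xt + (1 + G * K)⁻¹ * Yt := by
        rw [Matrix.mul_add, ← Matrix.mul_assoc]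
      rw [e]; exact (st3.mul hDCF.stXt).add (st2.mul hDCF.stYt)
    have stP2 : MatStable Ω (K * ((1 + G * K)⁻¹ * (G * Xt + Yt))) := by
      have e : K * ((1 + G * K)⁻¹ * (G * Xt + Yt))
          = (K * (1 + G * K)⁻¹ * G) * Xt + (K * (1 + G * K)⁻¹) * Yt := by
        rw [← Matrix.mul_assoc, Matrix.mul_add, ← Matrix.mul_assoc]
      rw [e]; exact (stKIG.mul hDCF.stXt).add (st4.mul hDCF.stYt)
    have stQ : MatStable Ω Q := by
      have e : Q = Y * (K * ((1 + G * K)⁻¹ * (G * Xt + Yt)))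
          - X * ((1 + G * K)⁻¹ * (G * Xt + Yt)) := by
        rw [hQdef, hWinv, Matrix.sub_mul, Matrix.mul_assoc]
      rw [e]; exact (hDCF.stY.mul stP2).sub (hDCF.stX.mul stP1)
    obtain ⟨s1, s2, s3, s4, s5⟩ := shifted_identities hDCF.bezout Q
    have hexp : Q * Mt + Q * (Nt * K) = Y * K - X := by
      rw [← Matrix.mul_add]; exact hQMt
    have hK2 : (Y - Q * Nt) * K = X + Q * Mt := by
      rw [Matrix.sub_mul, Matrix.mul_assoc, ← sub_eq_zero]
      have e : Y * K - Q * (Nt * K) - (X + Q * Mt)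
          = (Y * K - X) - (Q * Mt + Q * (Nt * K)) := by abel
      rw [e, hexp, sub_self]
    have hYqM : (Y - Q * Nt) * (M + K * N) = 1 := by
      rw [Matrix.mul_add, ← Matrix.mul_assoc, hK2]; exact s1
    have hYq : IsUnit (Y - Q * Nt).det := by
      have hd := congrArg Matrix.det hYqM
      rw [Matrix.det_mul, Matrix.det_one] at hd
      exact IsUnit.of_mul_eq_one _ hd
    obtain ⟨c1, c2, c3, c4⟩ := core_identities G M Y N Nt Mt Yt X Xt Q K
      hDCF.hMt hMtG hGM s1 s2 s3 s4 s5 hYq hK2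
    have hR : (Xt + M * Q) * Mt = K * (1 + G * K)⁻¹ := by
      have h5 := congrArg (fun Z => Z * (1 + G * K)⁻¹) c4
      beta_reduce at h5
      rw [Matrix.mul_assoc, Matrix.mul_nonsing_inv _ hdet, Matrix.mul_one] at h5
      exact h5
    have SpCL : Sp Kbin (K * (1 + G * K)⁻¹) := sp_closed_loop hQIg hKsp hdet
    refine ⟨Q - Q₀, stQ.sub hQ₀stable, ?_, ?_⟩
    · intro i j h
      have hsplit : M * (Q - Q₀) * Mt = (Xt + M * Q) * Mt - (Xt * Mt + M * Q₀ * Mt) := by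
        rw [Matrix.mul_sub, Matrix.sub_mul, Matrix.add_mul]
        abel
      rw [hsplit, Matrix.sub_apply, hR, SpCL i j h, hQ₀ i j h, sub_zero]
    · have e : Q₀ + (Q - Q₀) = Q := by abel
      rw [e, ← hK2, ← Matrix.mul_assoc, Matrix.nonsing_inv_mul _ hYq, Matrix.one_mul]
  · -- sufficiency
    rintro ⟨Qδ, stQδ, hQδ, hKeq⟩
    set Q := Q₀ + Qδ with hQdef
    have stQ : MatStable Ω Q := MatStable.add hQ₀stable stQδ
    obtain ⟨s1, s2, s3, s4, s5⟩ := shifted_identities hDCF.bezout Q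
    have stXq : MatStable Ω (X + Q * Mt) := hDCF.stX.add (stQ.mul hDCF.stMt)
    have stYq : MatStable Ω (Y - Q * Nt) := hDCF.stY.sub (stQ.mul hDCF.stNt)
    have hYq : IsUnit (Y - Q * Nt).det := by
      apply isUnit_det_of_evanescent (Y - Q * Nt) M ((X + Q * Mt) * N)
        (fun i j => (stYq i j).1)
        (ev_tendsto_mul_right_zero _ _ (fun i j => ev_tendsto (stXq i j).1) hNlim)
        s1
    have hK : (Y - Q * Nt) * K = X + Q * Mt := by
      rw [hKeq, ← Matrix.mul_assoc, Matrix.mul_nonsing_inv _ hYq, Matrix.one_mul]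
    obtain ⟨c1, c2, c3, c4⟩ := core_identities G M Y N Nt Mt Yt X Xt Q K
      hDCF.hMt hMtG hGM s1 s2 s3 s4 s5 hYq hK
    have hdet : IsUnit (1 + G * K).det := by
      have hd := congrArg Matrix.det c1
      rw [Matrix.det_mul, Matrix.det_one] at hd
      exact IsUnit.of_mul_eq_one _ hd
    have hinv1 : (1 + G * K)⁻¹ = (Yt - N * Q) * Mt := Matrix.inv_eq_right_inv c1
    have hinv3 : (1 + K * G)⁻¹ = M * (Y - Q * Nt) := Matrix.inv_eq_right_inv c3
    constructor
    · refine ⟨hdet, ?_, ?_, ?_, ?_⟩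
      · rw [hinv1]; exact (hDCF.stYt.sub (hDCF.stN.mul stQ)).mul hDCF.stMt
      · rw [hinv1, Matrix.mul_assoc, hMtG]
        exact (hDCF.stYt.sub (hDCF.stN.mul stQ)).mul hDCF.stNt
      · rw [hinv1, c2]; exact (hDCF.stXt.add (hDCF.stM.mul stQ)).mul hDCF.stMt
      · rw [hinv3]; exact hDCF.stM.mul (hDCF.stY.sub (stQ.mul hDCF.stNt))
    · -- sparsity of K
      have SpR : Sp Kbin ((Xt + M * Q) * Mt) := by
        have hsplit : (Xt + M * Q) * Mt = (Xt * Mt + M * Q₀ * Mt) + M * Qδ * Mt := by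
          rw [hQdef, Matrix.mul_add, Matrix.add_mul, Matrix.add_mul]
          abel
        intro i j h
        rw [hsplit, Matrix.add_apply, hQ₀ i j h, hQδ i j h, add_zero]
      have hB1 : (1 - G * ((Xt + M * Q) * Mt)) * (1 + G * K) = 1 := by
        rw [Matrix.sub_mul, Matrix.one_mul, Matrix.mul_assoc, c4, add_sub_cancel_right]
      have hrw : 1 + (-G) * ((Xt + M * Q) * Mt) = 1 - G * ((Xt + M * Q) * Mt) := by
        rw [Matrix.neg_mul, ← sub_eq_add_neg]
      have hdetB : IsUnit (1 + (-G) * ((Xt + M * Q) * Mt)).det := by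
        rw [hrw]
        have hd := congrArg Matrix.det hB1
        rw [Matrix.det_mul, Matrix.det_one] at hd
        exact IsUnit.of_mul_eq_one _ hd
      have hSp := sp_closed_loop hQIneg SpR hdetB
      rw [hrw, Matrix.inv_eq_right_inv hB1, c4] at hSp
      exact hSp
end
end

section
/- (Proposition 2, part 2: the rank test is independent of the choice of row factorizations.) Let G ∈ F^{m×p} be strictly proper with output partition ρy : Fin m → Fin ry, and let {(M̃ᵢ, Ñᵢ)} and {(M̃ᵢ', Ñᵢ')} be two families of left coprime factorizations over Ω of the block rows of G (as in Proposition 2, part 1), with ρy-block-diagonal concatenations (M̃, Ñ) and (M̃', Ñ') and associated matrices Ψ = [M̃ Ñ], Ψ' = [M̃' Ñ']. Then for every λ₀ ∈ ℂ∖Ω, the complex matrices Ψ(λ₀) and Ψ'(λ₀) have the same rank; in particular, rank Ψ(λ₀) = m holds for all unstable poles λ₀ of G if and only if rank Ψ'(λ₀) = m holds for all unstable poles λ₀ of G. -/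
open Matrix

noncomputable section

/-- The subring of rational functions whose denominator does not vanish at `z`. -/
def RzSub (z : ℂ) : Subring F where
  carrier := {f : F | Polynomial.eval₂ (algebraMap ℝ ℂ) z f.denom ≠ 0}
  one_mem' := by simp
  zero_mem' := by simp
  mul_mem' := by
    intro a b ha hb h0
    have := Polynomial.eval₂_eq_zero_of_dvd_of_eval₂_eq_zero (algebraMap ℝ ℂ) z
      (RatFunc.denom_mul_dvd a b) h0
    rw [Polynomial.eval₂_mul] at this
    rcases mul_eq_zero.mp this with h | h
    · exact ha h
    · exact hb h
  add_mem' := by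
    intro a b ha hb h0
    have := Polynomial.eval₂_eq_zero_of_dvd_of_eval₂_eq_zero (algebraMap ℝ ℂ) z
      (RatFunc.denom_add_dvd a b) h0
    rw [Polynomial.eval₂_mul] at this
    rcases mul_eq_zero.mp this with h | h
    · exact ha h
    · exact hb h
  neg_mem' := by
    intro a ha h0
    apply ha
    have : (-a : F) = (-1 : F) * a := by ring
    have hd := RatFunc.denom_mul_dvd (-1 : F) a
    rw [← this] at hd
    have h1 : RatFunc.denom (-1 : F) = 1 := by
      rw [show (-1 : F) = RatFunc.C (-1 : ℝ) by simp [map_neg], RatFunc.denom_C]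
    rw [h1, one_mul] at hd
    exact Polynomial.eval₂_eq_zero_of_dvd_of_eval₂_eq_zero (algebraMap ℝ ℂ) z hd h0

/-- Evaluation at `z` as a ring hom on `RzSub z`. -/
def evalHomZ (z : ℂ) : RzSub z →+* ℂ where
  toFun f := RatFunc.eval (algebraMap ℝ ℂ) z f.val
  map_one' := by simp
  map_zero' := by simp
  map_mul' a b := by
    have h := RatFunc.eval_mul (f := algebraMap ℝ ℂ) (a := z) (x := a.val) (y := b.val) a.2 b.2
    exact h
  map_add' a b := by
    have h := RatFunc.eval_add (f := algebraMap ℝ ℂ) (a := z) (x := a.val) (y := b.val) a.2 b.2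
    exact h

lemma evalHomZ_eq (z : ℂ) (f : RzSub z) : evalHomZ z f = evalC z f.val := by
  show RatFunc.eval (algebraMap ℝ ℂ) z f.val = _
  rw [RatFunc.eval, evalC, Polynomial.eval₂_eq_eval_map, Polynomial.eval₂_eq_eval_map]

lemma evalC_zero (z : ℂ) : evalC z (0 : F) = 0 := by simp [evalC]

lemma evalC_one (z : ℂ) : evalC z (1 : F) = 1 := by simp [evalC]

/-- For matrices with entries in `RzSub z`, evaluation commutes with products. -/
lemma matrix_map_evalC_mul (z : ℂ) {a b c : Type} [Fintype b]
    (A : Matrix a b F) (B : Matrix b c F)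
    (hA : ∀ i j, A i j ∈ RzSub z) (hB : ∀ i j, B i j ∈ RzSub z) :
    (A * B).map (evalC z) = A.map (evalC z) * B.map (evalC z) := by
  let A' : Matrix a b (RzSub z) := Matrix.of fun i j => (⟨A i j, hA i j⟩ : RzSub z)
  let B' : Matrix b c (RzSub z) := Matrix.of fun i j => (⟨B i j, hB i j⟩ : RzSub z)
  have key : ∀ {d e : Type} (M : Matrix d e (RzSub z)),
      (M.map ((RzSub z).subtype)).map (evalC z) = M.map (evalHomZ z) := by
    intro d e M
    ext i j
    exact (evalHomZ_eq z (M i j)).symm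
  have hA' : A = A'.map ((RzSub z).subtype) := by ext i j; rfl
  have hB' : B = B'.map ((RzSub z).subtype) := by ext i j; rfl
  rw [hA', hB', ← Matrix.map_mul (f := (RzSub z).subtype), key, key, key, Matrix.map_mul]

/-- Glue a family of block matrices along the fibers of `ρy` into a block diagonal matrix. -/
def glueBD {m ry : ℕ} (ρy : Fin m → Fin ry)
    (Ub : ∀ i : Fin ry, Matrix {j // ρy j = i} {j // ρy j = i} F) :
    Matrix (Fin m) (Fin m) F :=
  Matrix.of fun a b => if h : ρy b = ρy a then Ub (ρy a) ⟨a, rfl⟩ ⟨b, h⟩ else 0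

lemma glueBD_apply_mem {m ry : ℕ} {ρy : Fin m → Fin ry}
    (Ub : ∀ i : Fin ry, Matrix {j // ρy j = i} {j // ρy j = i} F)
    {i : Fin ry} (a b : {j // ρy j = i}) :
    glueBD ρy Ub a.val b.val = Ub i a b := by
  obtain ⟨a, ha⟩ := a
  obtain ⟨b, hb⟩ := b
  subst ha
  simp only [glueBD, Matrix.of_apply, dif_pos hb]

lemma glueBD_apply_ne {m ry : ℕ} {ρy : Fin m → Fin ry}
    (Ub : ∀ i : Fin ry, Matrix {j // ρy j = i} {j // ρy j = i} F)
    {a b : Fin m} (h : ¬ ρy b = ρy a) :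
    glueBD ρy Ub a b = 0 := dif_neg h

lemma glueBD_mul {m ry : ℕ} {ρy : Fin m → Fin ry}
    (Ub : ∀ i : Fin ry, Matrix {j // ρy j = i} {j // ρy j = i} F)
    {κ : Type} [Fintype κ] (B : Matrix (Fin m) κ F) (a : Fin m) (k : κ) :
    (glueBD ρy Ub * B) a k =
      (Ub (ρy a) * B.submatrix (Subtype.val : {j // ρy j = ρy a} → Fin m) id) ⟨a, rfl⟩ k := by
  classical
  rw [Matrix.mul_apply, Matrix.mul_apply]
  rw [← Finset.sum_filter_of_ne (p := fun c => ρy c = ρy a)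
    (fun c _ hc => by_contra fun h => hc (by rw [glueBD_apply_ne Ub h, zero_mul]))]
  rw [Finset.sum_subtype (p := fun c => ρy c = ρy a) _ (by simp)
    (fun c => glueBD ρy Ub a c * B c k)]
  refine Finset.sum_congr rfl fun c _ => ?_
  rw [show glueBD ρy Ub a c.val = Ub (ρy a) ⟨a, rfl⟩ c from glueBD_apply_mem Ub ⟨a, rfl⟩ c]
  rfl

/-- Block algebra: the transition matrix between two left coprime factorizations. -/
lemma blockU_eq {k q : Type} [Fintype k] [DecidableEq k] [Fintype q]
    (A A' : Matrix k k F) (B B' : Matrix k q F) (Gi : Matrix k q F)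
    (hA : IsUnit A.det) (hA' : IsUnit A'.det)
    (hGA : Gi = A⁻¹ * B) (hGA' : Gi = A'⁻¹ * B')
    (X : Matrix q k F) (Y : Matrix k k F) (hbz : B * X + A * Y = 1) :
    B' * X + A' * Y = A' * A⁻¹ := by
  have hB' : A' * Gi = B' := by rw [hGA', Matrix.mul_nonsing_inv_cancel_left _ _ hA']
  have key : A' * A⁻¹ * (B * X + A * Y) = B' * X + A' * Y := by
    rw [Matrix.mul_add]
    congr 1
    · rw [← hB', hGA]
      simp only [Matrix.mul_assoc]
    · rw [Matrix.mul_assoc, Matrix.nonsing_inv_mul_cancel_left _ _ hA]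
  rw [← key, hbz, Matrix.mul_one]

set_option maxHeartbeats 1600000 in
/-- **Proposition 2, part 2.** The rank test is independent of the choice of the row coprime
factorizations: if `(M̃, Ñ)` and `(M̃', Ñ')` are two block-diagonal concatenations of families
of left coprime factorizations of the block rows of `G`, then for every `z₀ ∈ ℂ∖Ω` the
matrices `Ψ(z₀) = [M̃(z₀) Ñ(z₀)]` and `Ψ'(z₀) = [M̃'(z₀) Ñ'(z₀)]` have the same rank; in
particular the rank-`m` condition at the unstable poles of `G` holds for one family iff it
holds for the other. -/
theorem rank_test_independent_of_row_factorization (Ω : Set ℂ) (m p ry : ℕ)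
    (ρy : Fin m → Fin ry)
    (G : Matrix (Fin m) (Fin p) F) (hG : StrictlyProper G)
    (Mt Mt' : Matrix (Fin m) (Fin m) F) (Nt Nt' : Matrix (Fin m) (Fin p) F)
    (hMtStable : MatStable Ω Mt) (hNtStable : MatStable Ω Nt)
    (hMtStable' : MatStable Ω Mt') (hNtStable' : MatStable Ω Nt')
    (hMtdiag : ∀ i j, ρy i ≠ ρy j → Mt i j = 0)
    (hMtdiag' : ∀ i j, ρy i ≠ ρy j → Mt' i j = 0)
    (hrow : ∀ i : Fin ry,
      IsUnit (Mt.submatrix (Subtype.val : {j // ρy j = i} → Fin m)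
        (Subtype.val : {j // ρy j = i} → Fin m)).det ∧
      G.submatrix (Subtype.val : {j // ρy j = i} → Fin m) id =
        (Mt.submatrix (Subtype.val : {j // ρy j = i} → Fin m)
          (Subtype.val : {j // ρy j = i} → Fin m))⁻¹ *
          Nt.submatrix (Subtype.val : {j // ρy j = i} → Fin m) id ∧
      ∃ Xti : Matrix (Fin p) {j // ρy j = i} F,
        ∃ Yti : Matrix {j // ρy j = i} {j // ρy j = i} F,
          MatStable Ω Xti ∧ MatStable Ω Yti ∧
          Nt.submatrix (Subtype.val : {j // ρy j = i} → Fin m) id * Xti +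
            Mt.submatrix (Subtype.val : {j // ρy j = i} → Fin m)
              (Subtype.val : {j // ρy j = i} → Fin m) * Yti = 1)
    (hrow' : ∀ i : Fin ry,
      IsUnit (Mt'.submatrix (Subtype.val : {j // ρy j = i} → Fin m)
        (Subtype.val : {j // ρy j = i} → Fin m)).det ∧
      G.submatrix (Subtype.val : {j // ρy j = i} → Fin m) id =
        (Mt'.submatrix (Subtype.val : {j // ρy j = i} → Fin m)
          (Subtype.val : {j // ρy j = i} → Fin m))⁻¹ *
          Nt'.submatrix (Subtype.val : {j // ρy j = i} → Fin m) id ∧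
      ∃ Xti : Matrix (Fin p) {j // ρy j = i} F,
        ∃ Yti : Matrix {j // ρy j = i} {j // ρy j = i} F,
          MatStable Ω Xti ∧ MatStable Ω Yti ∧
          Nt'.submatrix (Subtype.val : {j // ρy j = i} → Fin m) id * Xti +
            Mt'.submatrix (Subtype.val : {j // ρy j = i} → Fin m)
              (Subtype.val : {j // ρy j = i} → Fin m) * Yti = 1) :
    (∀ z₀ : ℂ, z₀ ∉ Ω →
      Matrix.rank (Matrix.of fun (i : Fin m) (jk : Fin m ⊕ Fin p) =>
        Sum.elim (fun j => evalC z₀ (Mt i j)) (fun k => evalC z₀ (Nt i k)) jk) =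
      Matrix.rank (Matrix.of fun (i : Fin m) (jk : Fin m ⊕ Fin p) =>
        Sum.elim (fun j => evalC z₀ (Mt' i j)) (fun k => evalC z₀ (Nt' i k)) jk)) ∧
    ((∀ z₀ : ℂ, z₀ ∉ Ω →
        (∃ a b, ((G a b).denom.map (algebraMap ℝ ℂ)).IsRoot z₀) →
        Matrix.rank (Matrix.of fun (i : Fin m) (jk : Fin m ⊕ Fin p) =>
          Sum.elim (fun j => evalC z₀ (Mt i j)) (fun k => evalC z₀ (Nt i k)) jk) = m) ↔
      (∀ z₀ : ℂ, z₀ ∉ Ω →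
        (∃ a b, ((G a b).denom.map (algebraMap ℝ ℂ)).IsRoot z₀) →
        Matrix.rank (Matrix.of fun (i : Fin m) (jk : Fin m ⊕ Fin p) =>
          Sum.elim (fun j => evalC z₀ (Mt' i j)) (fun k => evalC z₀ (Nt' i k)) jk) = m)) := by
  classical
  have main : ∀ z₀ : ℂ, z₀ ∉ Ω →
      Matrix.rank (Matrix.of fun (i : Fin m) (jk : Fin m ⊕ Fin p) =>
        Sum.elim (fun j => evalC z₀ (Mt i j)) (fun k => evalC z₀ (Nt i k)) jk) =
      Matrix.rank (Matrix.of fun (i : Fin m) (jk : Fin m ⊕ Fin p) =>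
        Sum.elim (fun j => evalC z₀ (Mt' i j)) (fun k => evalC z₀ (Nt' i k)) jk) := by
    intro z₀ hz₀
    -- unpack the two families of factorizations
    have h1 := fun i => (hrow i).1
    have h2 := fun i => (hrow i).2.1
    choose Xt Yt hXst hYst hbez using fun i => (hrow i).2.2
    have h1' := fun i => (hrow' i).1
    have h2' := fun i => (hrow' i).2.1
    choose Xt' Yt' hXst' hYst' hbez' using fun i => (hrow' i).2.2
    -- the block transition matrices
    obtain ⟨UbF, hUbF⟩ : ∃ f : ∀ i : Fin ry, Matrix {j // ρy j = i} {j // ρy j = i} F,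
        f = fun i => Nt'.submatrix Subtype.val id * Xt i +
          Mt'.submatrix Subtype.val Subtype.val * Yt i := ⟨_, rfl⟩
    obtain ⟨VbF, hVbF⟩ : ∃ f : ∀ i : Fin ry, Matrix {j // ρy j = i} {j // ρy j = i} F,
        f = fun i => Nt.submatrix Subtype.val id * Xt' i +
          Mt.submatrix Subtype.val Subtype.val * Yt' i := ⟨_, rfl⟩
    have hUbEq : ∀ i : Fin ry,
        UbF i = (Mt'.submatrix Subtype.val Subtype.val :
            Matrix {j // ρy j = i} {j // ρy j = i} F) *
          (Mt.submatrix Subtype.val Subtype.val :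
            Matrix {j // ρy j = i} {j // ρy j = i} F)⁻¹ := by
      intro i
      rw [hUbF]
      exact blockU_eq _ _ _ _ _ (h1 i) (h1' i) (h2 i) (h2' i) (Xt i) (Yt i) (hbez i)
    have hVbEq : ∀ i : Fin ry,
        VbF i = (Mt.submatrix Subtype.val Subtype.val :
            Matrix {j // ρy j = i} {j // ρy j = i} F) *
          (Mt'.submatrix Subtype.val Subtype.val :
            Matrix {j // ρy j = i} {j // ρy j = i} F)⁻¹ := by
      intro i
      rw [hVbF]
      exact blockU_eq _ _ _ _ _ (h1' i) (h1 i) (h2' i) (h2 i) (Xt' i) (Yt' i) (hbez' i)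
    have hUA : ∀ i : Fin ry,
        UbF i * (Mt.submatrix Subtype.val Subtype.val :
            Matrix {j // ρy j = i} {j // ρy j = i} F) =
          (Mt'.submatrix Subtype.val Subtype.val :
            Matrix {j // ρy j = i} {j // ρy j = i} F) := by
      intro i
      rw [hUbEq i, Matrix.nonsing_inv_mul_cancel_right _ _ (h1 i)]
    have hUB : ∀ i : Fin ry,
        UbF i * (Nt.submatrix Subtype.val id :
            Matrix {j // ρy j = i} (Fin p) F) =
          (Nt'.submatrix Subtype.val id : Matrix {j // ρy j = i} (Fin p) F) := by
      intro i
      rw [hUbEq i, Matrix.mul_assoc, ← h2 i, h2' i,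
        Matrix.mul_nonsing_inv_cancel_left _ _ (h1' i)]
    have hUVb : ∀ i, UbF i * VbF i = 1 := by
      intro i
      rw [hUbEq i, hVbEq i, Matrix.mul_assoc, Matrix.nonsing_inv_mul_cancel_left _ _ (h1 i),
        Matrix.mul_nonsing_inv _ (h1' i)]
    -- global transition matrices
    obtain ⟨U, hU⟩ : ∃ U, U = glueBD ρy UbF := ⟨_, rfl⟩
    obtain ⟨V, hV⟩ : ∃ V, V = glueBD ρy VbF := ⟨_, rfl⟩
    have hUMt : U * Mt = Mt' := by
      ext a b
      rw [hU, glueBD_mul]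
      by_cases h : ρy b = ρy a
      · have e1 : (UbF (ρy a) * Mt.submatrix (Subtype.val : {j // ρy j = ρy a} → Fin m) id)
            ⟨a, rfl⟩ b = (UbF (ρy a) * (Mt.submatrix Subtype.val Subtype.val :
              Matrix {j // ρy j = ρy a} {j // ρy j = ρy a} F))
            ⟨a, rfl⟩ (⟨b, h⟩ : {j // ρy j = ρy a}) := rfl
        rw [e1, hUA (ρy a)]
        rfl
      · rw [Matrix.mul_apply]
        rw [Finset.sum_eq_zero (fun c _ => by
          rw [Matrix.submatrix_apply, id_eq, hMtdiag _ _ (fun hh => h (hh.symm.trans c.prop)),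
            mul_zero])]
        exact (hMtdiag' a b (fun hh => h hh.symm)).symm
    have hUNt : U * Nt = Nt' := by
      ext a k
      rw [hU, glueBD_mul, hUB (ρy a)]
      rfl
    have hUV1 : U * V = 1 := by
      ext a b
      rw [hU, glueBD_mul]
      by_cases h : ρy b = ρy a
      · rw [Matrix.mul_apply]
        have e1 : ∀ c : {j // ρy j = ρy a},
            V.submatrix (Subtype.val : {j // ρy j = ρy a} → Fin m) id c b
              = VbF (ρy a) c (⟨b, h⟩ : {j // ρy j = ρy a}) := by
          intro c
          rw [Matrix.submatrix_apply, id_eq, hV]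
          exact glueBD_apply_mem VbF c ⟨b, h⟩
        rw [Finset.sum_congr rfl (fun c _ => by rw [e1 c])]
        rw [← Matrix.mul_apply, hUVb (ρy a)]
        by_cases hab : a = b
        · subst hab
          simp [Matrix.one_apply]
        · rw [Matrix.one_apply_ne (fun hc => hab (Subtype.ext_iff.mp hc)),
            Matrix.one_apply_ne hab]
      · rw [Matrix.mul_apply]
        rw [Finset.sum_eq_zero (fun c _ => by
          rw [Matrix.submatrix_apply, id_eq, hV,
            glueBD_apply_ne VbF (fun hh => h (hh.trans c.prop)), mul_zero])]
        exact (Matrix.one_apply_ne (fun hab => h (congrArg ρy hab.symm))).symm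
    -- membership in the evaluation subring
    have hstS : ∀ {a b : Type} (A : Matrix a b F), MatStable Ω A →
        ∀ i j, A i j ∈ RzSub z₀ := by
      intro a b A hA i j h0
      exact hz₀ ((hA i j).2 z₀ (by
        rwa [Polynomial.IsRoot, ← Polynomial.eval₂_eq_eval_map]))
    have hmulS : ∀ {a b c : Type} [Fintype b] (A : Matrix a b F) (B : Matrix b c F),
        (∀ i j, A i j ∈ RzSub z₀) → (∀ i j, B i j ∈ RzSub z₀) →
        ∀ i j, (A * B) i j ∈ RzSub z₀ := by
      intro a b c _ A B hA hB i j
      rw [Matrix.mul_apply]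
      exact Subring.sum_mem _ fun k _ => Subring.mul_mem _ (hA i k) (hB k j)
    have hUbS : ∀ i x y, UbF i x y ∈ RzSub z₀ := by
      intro i x y
      rw [hUbF]
      exact Subring.add_mem _
        (hmulS (Nt'.submatrix Subtype.val id) (Xt i)
          (fun u v => hstS _ hNtStable' u.val v) (fun u v => hstS _ (hXst i) u v) x y)
        (hmulS (Mt'.submatrix Subtype.val Subtype.val) (Yt i)
          (fun u v => hstS _ hMtStable' u.val v.val) (fun u v => hstS _ (hYst i) u v) x y)
    have hVbS : ∀ i x y, VbF i x y ∈ RzSub z₀ := by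
      intro i x y
      rw [hVbF]
      exact Subring.add_mem _
        (hmulS (Nt.submatrix Subtype.val id) (Xt' i)
          (fun u v => hstS _ hNtStable u.val v) (fun u v => hstS _ (hXst' i) u v) x y)
        (hmulS (Mt.submatrix Subtype.val Subtype.val) (Yt' i)
          (fun u v => hstS _ hMtStable u.val v.val) (fun u v => hstS _ (hYst' i) u v) x y)
    have hUS : ∀ a b, U a b ∈ RzSub z₀ := by
      intro a b
      rw [hU]
      by_cases h : ρy b = ρy a
      · rw [show glueBD ρy UbF a b = UbF (ρy a) ⟨a, rfl⟩ ⟨b, h⟩ from dif_pos h]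
        exact hUbS _ _ _
      · rw [glueBD_apply_ne UbF h]
        exact Subring.zero_mem _
    have hVS : ∀ a b, V a b ∈ RzSub z₀ := by
      intro a b
      rw [hV]
      by_cases h : ρy b = ρy a
      · rw [show glueBD ρy VbF a b = VbF (ρy a) ⟨a, rfl⟩ ⟨b, h⟩ from dif_pos h]
        exact hVbS _ _ _
      · rw [glueBD_apply_ne VbF h]
        exact Subring.zero_mem _
    -- evaluated transition matrix is invertible
    have hUVe : U.map (evalC z₀) * V.map (evalC z₀) = 1 := by
      rw [← matrix_map_evalC_mul z₀ U V hUS hVS, hUV1,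
        Matrix.map_one _ (evalC_zero z₀) (evalC_one z₀)]
    have hdet : IsUnit ((U.map (evalC z₀)).det) :=
      IsUnit.of_mul_eq_one _ (by rw [← Matrix.det_mul, hUVe, Matrix.det_one])
    -- assemble
    have hΨS : ∀ i jk, Matrix.fromCols Mt Nt i jk ∈ RzSub z₀ := by
      intro i jk
      rcases jk with j | k
      · exact hstS _ hMtStable i j
      · exact hstS _ hNtStable i k
    have hfc : U * Matrix.fromCols Mt Nt = Matrix.fromCols Mt' Nt' := by
      rw [Matrix.mul_fromCols, hUMt, hUNt]
    have hg1 : (Matrix.of fun (i : Fin m) (jk : Fin m ⊕ Fin p) =>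
        Sum.elim (fun j => evalC z₀ (Mt i j)) (fun k => evalC z₀ (Nt i k)) jk) =
        (Matrix.fromCols Mt Nt).map (evalC z₀) := by
      ext i jk
      rcases jk with j | k <;> rfl
    have hg2 : (Matrix.of fun (i : Fin m) (jk : Fin m ⊕ Fin p) =>
        Sum.elim (fun j => evalC z₀ (Mt' i j)) (fun k => evalC z₀ (Nt' i k)) jk) =
        (Matrix.fromCols Mt' Nt').map (evalC z₀) := by
      ext i jk
      rcases jk with j | k <;> rfl
    rw [hg1, hg2, ← hfc, matrix_map_evalC_mul z₀ U _ hUS hΨS,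
      Matrix.rank_mul_eq_right_of_isUnit_det _ _ hdet]
  refine ⟨main, ?_⟩
  constructor
  · intro h z hz hp
    rw [← main z hz]
    exact h z hz hp
  · intro h z hz hp
    rw [main z hz]
    exact h z hz hp
end
end

section
/- (Completion of given coprime factorizations to a doubly coprime factorization.) Let G ∈ F^{m×p}, let (M̃, Ñ) be a left coprime factorization of G over Ω and let (N, M) be a right coprime factorization of G over Ω. Then there exist stable matrices X ∈ 𝔸^{p×m}, Y ∈ 𝔸^{p×p}, X̃ ∈ 𝔸^{p×m}, Ỹ ∈ 𝔸^{m×m} such that (M, N, M̃, Ñ, X, Y, X̃, Ỹ) is a DCF of G over Ω. In particular, given block partition maps ρu : Fin p → Fin ru and ρy : Fin m → Fin ry, if M̃ is ρy-block-diagonal and M is ρu-block-diagonal, then G admits an input/output decoupled DCF over Ω. -/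
open Matrix

noncomputable section

section Aux

lemma stableF_zero (Ω : Set ℂ) : StableF Ω 0 := by
  constructor
  · simp [RatFunc.intDegree_zero]
  · intro z hz
    simp [RatFunc.denom_zero, Polynomial.IsRoot] at hz

lemma stableF_one (Ω : Set ℂ) : StableF Ω 1 := by
  constructor
  · simp [RatFunc.intDegree_one]
  · intro z hz
    simp [RatFunc.denom_one, Polynomial.IsRoot] at hz

lemma stableF_root_aux {Ω : Set ℂ} {f g h : F} (hf : StableF Ω f) (hg : StableF Ω g)
    (hd : h.denom ∣ f.denom * g.denom) :
    ∀ z : ℂ, (h.denom.map (algebraMap ℝ ℂ)).IsRoot z → z ∈ Ω := by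
  intro z hz
  have hdvd : h.denom.map (algebraMap ℝ ℂ) ∣
      f.denom.map (algebraMap ℝ ℂ) * g.denom.map (algebraMap ℝ ℂ) := by
    rw [← Polynomial.map_mul]
    exact Polynomial.map_dvd _ hd
  obtain ⟨c, hc⟩ := hdvd
  have : (f.denom.map (algebraMap ℝ ℂ)).eval z * (g.denom.map (algebraMap ℝ ℂ)).eval z = 0 := by
    rw [← Polynomial.eval_mul, hc, Polynomial.eval_mul, hz, zero_mul]
  rcases mul_eq_zero.mp this with h1 | h1
  · exact hf.2 z h1
  · exact hg.2 z h1

lemma stableF_add {Ω : Set ℂ} {f g : F} (hf : StableF Ω f) (hg : StableF Ω g) :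
    StableF Ω (f + g) := by
  refine ⟨?_, stableF_root_aux hf hg (RatFunc.denom_add_dvd f g)⟩
  rcases eq_or_ne g 0 with rfl | hg0
  · simpa using hf.1
  rcases eq_or_ne (f + g) 0 with h0 | h0
  · simp [h0, RatFunc.intDegree_zero]
  calc (f + g).intDegree ≤ max f.intDegree g.intDegree := RatFunc.intDegree_add_le hg0 h0
    _ ≤ 0 := max_le hf.1 hg.1

lemma stableF_mul {Ω : Set ℂ} {f g : F} (hf : StableF Ω f) (hg : StableF Ω g) :
    StableF Ω (f * g) := by
  refine ⟨?_, stableF_root_aux hf hg (RatFunc.denom_mul_dvd f g)⟩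
  rcases eq_or_ne f 0 with rfl | hf0
  · simp [RatFunc.intDegree_zero]
  rcases eq_or_ne g 0 with rfl | hg0
  · simp [RatFunc.intDegree_zero]
  rw [RatFunc.intDegree_mul hf0 hg0]
  exact add_nonpos hf.1 hg.1

lemma stableF_neg {Ω : Set ℂ} {f : F} (hf : StableF Ω f) : StableF Ω (-f) := by
  have h1 : StableF Ω (-1 : F) := by
    constructor
    · rw [RatFunc.intDegree_neg, RatFunc.intDegree_one]
    · intro z hz
      have : ((-1 : F)).denom = 1 := by
        have := RatFunc.denom_algebraMap (-1 : Polynomial ℝ)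
        simpa using this
      rw [this] at hz
      simp [Polynomial.IsRoot] at hz
  have := stableF_mul h1 hf
  simpa using this

lemma matStable_add {Ω : Set ℂ} {a b : Type} {A B : Matrix a b F}
    (hA : MatStable Ω A) (hB : MatStable Ω B) : MatStable Ω (A + B) := fun i j =>
  stableF_add (hA i j) (hB i j)

lemma matStable_neg {Ω : Set ℂ} {a b : Type} {A : Matrix a b F}
    (hA : MatStable Ω A) : MatStable Ω (-A) := fun i j => stableF_neg (hA i j)

lemma matStable_sub {Ω : Set ℂ} {a b : Type} {A B : Matrix a b F}
    (hA : MatStable Ω A) (hB : MatStable Ω B) : MatStable Ω (A - B) := by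
  rw [sub_eq_add_neg]; exact matStable_add hA (matStable_neg hB)

lemma matStable_mul {Ω : Set ℂ} {a b c : Type} [Fintype b] {A : Matrix a b F}
    {B : Matrix b c F} (hA : MatStable Ω A) (hB : MatStable Ω B) :
    MatStable Ω (A * B) := by
  intro i j
  rw [Matrix.mul_apply]
  exact Finset.sum_induction _ (StableF Ω) (fun _ _ => stableF_add) (stableF_zero Ω)
    (fun k _ => stableF_mul (hA i k) (hB k j))

lemma matStable_one {Ω : Set ℂ} {a : Type} [DecidableEq a] :
    MatStable Ω (1 : Matrix a a F) := by
  intro i j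
  rw [Matrix.one_apply]
  split
  · exact stableF_one Ω
  · exact stableF_zero Ω

end Aux

/-- **Completion of coprime factorizations to a DCF.** If `(M̃, Ñ)` is an LCF and `(N, M)` an
RCF of `G` over `Ω`, then there are stable `X, Y, X̃, Ỹ` making `(M, N, M̃, Ñ, X, Y, X̃, Ỹ)`
a DCF of `G` over `Ω`. In particular, if `M̃` is `ρy`-block-diagonal and `M` is
`ρu`-block-diagonal, then `G` admits an input/output decoupled DCF over `Ω`. -/
theorem completion_to_dcf (Ω : Set ℂ) (m p : ℕ)
    (G : Matrix (Fin m) (Fin p) F)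
    (Mt : Matrix (Fin m) (Fin m) F) (Nt : Matrix (Fin m) (Fin p) F)
    (hL : IsLCF Ω G Mt Nt)
    (N : Matrix (Fin m) (Fin p) F) (M : Matrix (Fin p) (Fin p) F)
    (hR : IsRCF Ω G N M) :
    (∃ (X : Matrix (Fin p) (Fin m) F) (Y : Matrix (Fin p) (Fin p) F)
        (Xt : Matrix (Fin p) (Fin m) F) (Yt : Matrix (Fin m) (Fin m) F),
        IsDCF Ω G M N Mt Nt X Y Xt Yt) ∧
    (∀ (ru ry : ℕ) (ρu : Fin p → Fin ru) (ρy : Fin m → Fin ry),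
      (∀ i j, ρy i ≠ ρy j → Mt i j = 0) →
      (∀ i j, ρu i ≠ ρu j → M i j = 0) →
      ∃ (M' : Matrix (Fin p) (Fin p) F) (N' : Matrix (Fin m) (Fin p) F)
        (Mt' : Matrix (Fin m) (Fin m) F) (Nt' : Matrix (Fin m) (Fin p) F)
        (X : Matrix (Fin p) (Fin m) F) (Y : Matrix (Fin p) (Fin p) F)
        (Xt : Matrix (Fin p) (Fin m) F) (Yt : Matrix (Fin m) (Fin m) F),
        IsDCF Ω G M' N' Mt' Nt' X Y Xt Yt ∧
        (∀ i j, ρu i ≠ ρu j → M' i j = 0) ∧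
        (∀ i j, ρy i ≠ ρy j → Mt' i j = 0)) := by
  obtain ⟨hsMt, hsNt, hMtu, hGL, Xt0, Yt0, hsXt0, hsYt0, hbezL⟩ := hL
  obtain ⟨hsN, hsM, hMu, hGR, X0, Y0, hsX0, hsY0, hbezR⟩ := hR
  -- key identity Nt * M = Mt * N
  have hNtM : Nt * M = Mt * N := by
    have h1 : Mt * G = Nt := by
      rw [hGL, ← Matrix.mul_assoc, Matrix.mul_nonsing_inv _ hMtu, Matrix.one_mul]
    have h2 : G * M = N := by
      rw [hGR, Matrix.mul_assoc, Matrix.nonsing_inv_mul _ hMu, Matrix.mul_one]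
    calc Nt * M = Mt * G * M := by rw [h1]
      _ = Mt * N := by rw [Matrix.mul_assoc, h2]
  set Λ : Matrix (Fin p) (Fin m) F := Y0 * Xt0 - X0 * Yt0 with hΛ
  have hsΛ : MatStable Ω Λ :=
    matStable_sub (matStable_mul hsY0 hsXt0) (matStable_mul hsX0 hsYt0)
  set Xt : Matrix (Fin p) (Fin m) F := Xt0 - M * Λ with hXt
  set Yt : Matrix (Fin m) (Fin m) F := Yt0 + N * Λ with hYt
  have hsXt : MatStable Ω Xt := matStable_sub hsXt0 (matStable_mul hsM hsΛ)
  have hsYt : MatStable Ω Yt := matStable_add hsYt0 (matStable_mul hsN hsΛ)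
  have dcf : IsDCF Ω G M N Mt Nt X0 Y0 Xt Yt := by
    refine ⟨hsM, hsN, hsMt, hsNt, hsX0, hsY0, hsXt, hsYt, hMu, hMtu, hGL, hGR, ?_⟩
    rw [Matrix.fromBlocks_multiply]
    have e11 : Y0 * M + X0 * N = 1 := hbezR
    have e21 : -Nt * M + Mt * N = 0 := by
      rw [Matrix.neg_mul, hNtM]; exact neg_add_cancel _
    have key1 : Y0 * (M * Λ) + X0 * (N * Λ) = Λ := by
      rw [← Matrix.mul_assoc, ← Matrix.mul_assoc, ← Matrix.add_mul, e11, Matrix.one_mul]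
    have key2 : Mt * (N * Λ) - Nt * (M * Λ) = 0 := by
      rw [← Matrix.mul_assoc, ← Matrix.mul_assoc, hNtM, sub_self]
    have e12 : Y0 * -Xt + X0 * Yt = 0 := by
      have expand : Y0 * -Xt + X0 * Yt
          = (Y0 * (M * Λ) + X0 * (N * Λ)) - (Y0 * Xt0 - X0 * Yt0) := by
        rw [hXt, hYt]
        simp only [Matrix.mul_sub, Matrix.mul_add, Matrix.neg_mul, Matrix.mul_neg, neg_sub, neg_neg]
        abel
      rw [expand, key1, hΛ, sub_self]
    have e22 : -Nt * -Xt + Mt * Yt = 1 := by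
      have expand : -Nt * -Xt + Mt * Yt
          = (Nt * Xt0 + Mt * Yt0) + (Mt * (N * Λ) - Nt * (M * Λ)) := by
        rw [hXt, hYt]
        simp only [Matrix.mul_sub, Matrix.mul_add, Matrix.neg_mul, Matrix.mul_neg, neg_sub, neg_neg]
        abel
      rw [expand, hbezL, key2, add_zero]
    rw [e11, e12, e21, e22, Matrix.fromBlocks_one]
  constructor
  · exact ⟨X0, Y0, Xt, Yt, dcf⟩
  · intro ru ry ρu ρy hMt hM
    exact ⟨M, N, Mt, Nt, X0, Y0, Xt, Yt, dcf, hM, hMt⟩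
end
end
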